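/- MGF bound for i.i.d. feedback system: Let (c_k) be i.i.d. non-negative random variables with M_c(−θ) = E[e^{−θ c_k}] for θ > 0, let S(s,t) = Σ_{k=s}^{t-1} c_k, and let S_win = (S ⊗ δ_d ⊗ δ^{+w})* ⊗ S with integer d > 0 and real w > 0. Then for every θ > 0, E[e^{−θ S_win(s,t)}] ≤ ( M_c(−θ)^d + d·e^{−θw} )^{⌊(t−s)/d⌋}. -/

import Mathlib

open scoped ENNReal NNReal
open MeasureTheory

/-- Min-plus convolution of bivariate functions. -/
noncomputable def conv (f g : ℕ → ℕ → ℝ≥0∞) : ℕ → ℕ → ℝ≥0∞ :=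
  fun s t => ⨅ τ ∈ Finset.Icc s t, f s τ + g τ t

/-- The neutral element δ : δ(s,t)=0 if s ≥ t, ∞ otherwise. -/
noncomputable def delta : ℕ → ℕ → ℝ≥0∞ := fun s t => if t ≤ s then 0 else ∞

/-- n-fold self-convolution: f^(0) = δ, f^(n+1) = f^(n) ⊗ f. -/
noncomputable def convPow (f : ℕ → ℕ → ℝ≥0∞) : ℕ → ℕ → ℕ → ℝ≥0∞
  | 0 => delta
  | n + 1 => conv (convPow f n) f

/-- Subadditive subClosure f* = inf over n of f^(n). -/
noncomputable def subClosure (f : ℕ → ℕ → ℝ≥0∞) : ℕ → ℕ → ℝ≥0∞ :=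
  fun s t => ⨅ n : ℕ, convPow f n s t

/-- Delay element: δ_d(s,t) = 0 if s ≥ t − d, ∞ otherwise. -/
noncomputable def deltaD (d : ℕ) : ℕ → ℕ → ℝ≥0∞ := fun s t => if t ≤ s + d then 0 else ∞

/-- Window element: δ^{+w}(s,t) = w if s ≥ t, ∞ otherwise. -/
noncomputable def deltaW (w : ℝ≥0∞) : ℕ → ℕ → ℝ≥0∞ := fun s t => if t ≤ s then w else ∞

/-- e^{−θ x} for an extended non-negative real x (equal to 0 when x = ∞). -/
noncomputable def expNeg (θ : ℝ) (x : ℝ≥0∞) : ℝ≥0∞ :=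
  if x = ∞ then 0 else ENNReal.ofReal (Real.exp (-θ * x.toReal))

section Pathwise

lemma conv_le {f g : ℕ → ℕ → ℝ≥0∞} {s t τ : ℕ} (h1 : s ≤ τ) (h2 : τ ≤ t) :
    conv f g s t ≤ f s τ + g τ t :=
  iInf₂_le τ (Finset.mem_Icc.mpr ⟨h1, h2⟩)

lemma le_conv {f g : ℕ → ℕ → ℝ≥0∞} {s t : ℕ} {x : ℝ≥0∞}
    (h : ∀ τ, s ≤ τ → τ ≤ t → x ≤ f s τ + g τ t) : x ≤ conv f g s t :=
  le_iInf₂ fun τ hτ => h τ (Finset.mem_Icc.mp hτ).1 (Finset.mem_Icc.mp hτ).2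

lemma conv_top {f g : ℕ → ℕ → ℝ≥0∞} {s t : ℕ} (h : t < s) : conv f g s t = ∞ := by
  unfold conv
  rw [Finset.Icc_eq_empty (by omega)]
  simp

lemma convPow_succ (f : ℕ → ℕ → ℝ≥0∞) (n : ℕ) : convPow f (n+1) = conv (convPow f n) f := rfl

lemma convPow_zero (f : ℕ → ℕ → ℝ≥0∞) : convPow f 0 = delta := rfl

lemma conv_congr {f f' g g' : ℕ → ℕ → ℝ≥0∞} {s t : ℕ}
    (hf : ∀ τ, s ≤ τ → τ ≤ t → f s τ = f' s τ)
    (hg : ∀ τ, s ≤ τ → τ ≤ t → g τ t = g' τ t) : conv f g s t = conv f' g' s t := by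
  unfold conv
  refine iInf_congr fun σ => iInf_congr fun hσ => ?_
  obtain ⟨h1, h2⟩ := Finset.mem_Icc.mp hσ
  rw [hf σ h1 h2, hg σ h1 h2]

lemma delta_of_le {s t : ℕ} (h : t ≤ s) : delta s t = 0 := if_pos h

lemma delta_of_lt {s t : ℕ} (h : s < t) : delta s t = ∞ := if_neg (by omega)

/-- Helper: add a constant to a biInf over a finset. -/
lemma biInf_add_const {s : Finset ℕ} {f : ℕ → ℝ≥0∞} {c : ℝ≥0∞} :
    (⨅ τ ∈ s, f τ) + c = ⨅ τ ∈ s, (f τ + c) := by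
  simp_rw [ENNReal.iInf_add]

lemma const_add_biInf {s : Finset ℕ} {f : ℕ → ℝ≥0∞} {c : ℝ≥0∞} :
    c + (⨅ τ ∈ s, f τ) = ⨅ τ ∈ s, (c + f τ) := by
  simp_rw [ENNReal.add_iInf]

/-- Cumulative sum process. -/
noncomputable def ncS (a : ℕ → ℝ≥0∞) : ℕ → ℕ → ℝ≥0∞ := fun s t => ∑ k ∈ Finset.Ico s t, a k

/-- The feedback element S ⊗ δ_d ⊗ δ^{+w}. -/
noncomputable def ncF (d : ℕ) (W : ℝ≥0∞) (a : ℕ → ℝ≥0∞) : ℕ → ℕ → ℝ≥0∞ :=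
  conv (conv (ncS a) (deltaD d)) (deltaW W)

/-- The windowed system (S ⊗ δ_d ⊗ δ^{+w})* ⊗ S. -/
noncomputable def ncG (d : ℕ) (W : ℝ≥0∞) (a : ℕ → ℝ≥0∞) : ℕ → ℕ → ℝ≥0∞ :=
  conv (subClosure (ncF d W a)) (ncS a)

variable {a : ℕ → ℝ≥0∞} {d : ℕ} {W : ℝ≥0∞}

lemma ncS_zero {s t : ℕ} (h : t ≤ s) : ncS a s t = 0 := by
  unfold ncS
  rw [Finset.Ico_eq_empty (by omega)]
  simp

lemma ncS_mono_left {s s' t : ℕ} (h : s ≤ s') : ncS a s' t ≤ ncS a s t :=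
  Finset.sum_le_sum_of_subset (by intro k hk; simp only [Finset.mem_Ico] at *; omega)

lemma ncS_mono_right {s t t' : ℕ} (h : t ≤ t') : ncS a s t ≤ ncS a s t' :=
  Finset.sum_le_sum_of_subset (by intro k hk; simp only [Finset.mem_Ico] at *; omega)

lemma ncS_add {s u t : ℕ} (h1 : s ≤ u) (h2 : u ≤ t) :
    ncS a s u + ncS a u t = ncS a s t :=
  Finset.sum_Ico_consecutive _ h1 h2

lemma conv_ncS_deltaD {s t : ℕ} (h : s ≤ t) :
    conv (ncS a) (deltaD d) s t = ncS a s (t - d) := by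
  apply le_antisymm
  · refine le_trans (conv_le (τ := max s (t - d)) (le_max_left _ _) (by omega)) ?_
    have hD : deltaD d (max s (t - d)) t = 0 := if_pos (by omega)
    rw [hD, add_zero]
    rcases le_total (t - d) s with hc | hc
    · rw [max_eq_left hc, ncS_zero le_rfl, ncS_zero hc]
    · rw [max_eq_right hc]
  · apply le_conv
    intro τ h1 h2
    by_cases hD : t ≤ τ + d
    · rw [show deltaD d τ t = 0 from if_pos hD, add_zero]
      exact ncS_mono_right (by omega)
    · rw [show deltaD d τ t = ∞ from if_neg hD]
      simp

lemma ncF_eq {s t : ℕ} (h : s ≤ t) : ncF d W a s t = W + ncS a s (t - d) := by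
  unfold ncF
  apply le_antisymm
  · refine le_trans (conv_le (τ := t) h le_rfl) ?_
    rw [conv_ncS_deltaD h, show deltaW W t t = W from if_pos le_rfl, add_comm]
  · apply le_conv
    intro τ h1 h2
    by_cases hD : t ≤ τ
    · have hτ : τ = t := le_antisymm h2 hD
      rw [hτ, conv_ncS_deltaD h, show deltaW W t t = W from if_pos le_rfl, add_comm]
    · rw [show deltaW W τ t = ∞ from if_neg hD]
      simp

lemma ncF_ge_W {s t : ℕ} : W ≤ ncF d W a s t := by
  rcases le_or_gt s t with h | h
  · rw [ncF_eq h]; exact le_self_add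
  · rw [show ncF d W a s t = ∞ from conv_top h]; exact le_top

lemma ncF_max_le (y : ℕ) {σ₁ σ : ℕ} (h : σ₁ ≤ σ) :
    ncF d W a (max σ₁ y) (max σ y) ≤ ncF d W a σ₁ σ := by
  rcases le_or_gt σ y with hc | hc
  · rw [max_eq_right hc, max_eq_right (h.trans hc), ncF_eq le_rfl, ncS_zero (by omega), add_zero]
    exact ncF_ge_W
  · rw [max_eq_left hc.le, ncF_eq (max_le h hc.le), ncF_eq h]
    exact add_le_add_right (ncS_mono_left (le_max_left _ _)) _

lemma convPow_start_mono {x y σ : ℕ} (hxy : x ≤ y) :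
    ∀ n, convPow (ncF d W a) n y (max σ y) ≤ convPow (ncF d W a) n x σ := by
  intro n
  induction n generalizing σ with
  | zero =>
    show delta y (max σ y) ≤ delta x σ
    rcases le_or_gt σ x with hc | hc
    · rw [max_eq_right (hc.trans hxy), delta_of_le le_rfl]
      exact zero_le
    · rw [delta_of_lt hc]; exact le_top
  | succ n ih =>
    apply le_conv
    intro σ₁ h1 h2
    refine le_trans (conv_le (τ := max σ₁ y) (le_max_right _ _)
      (max_le (le_max_of_le_left h2) (le_max_right _ _))) ?_
    exact add_le_add ih (ncF_max_le y h2)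

lemma ncG_le {x τ t : ℕ} (h1 : x ≤ τ) (h2 : τ ≤ t) :
    ncG d W a x t ≤ subClosure (ncF d W a) x τ + ncS a τ t := conv_le h1 h2

lemma subClosure_le_convPow {f : ℕ → ℕ → ℝ≥0∞} {x t n : ℕ} :
    subClosure f x t ≤ convPow f n x t := iInf_le _ n

lemma ncG_le_ncS {x t : ℕ} (h : x ≤ t) : ncG d W a x t ≤ ncS a x t := by
  refine le_trans (ncG_le le_rfl h) ?_
  have : subClosure (ncF d W a) x x ≤ 0 := by
    refine le_trans (subClosure_le_convPow (n := 0)) ?_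
    rw [show convPow (ncF d W a) 0 x x = delta x x from rfl, delta_of_le le_rfl]
  rw [le_zero_iff.mp this, zero_add]

lemma ncG_top {x t : ℕ} (h : t < x) : ncG d W a x t = ∞ := conv_top h

lemma ncG_start_mono {x y t : ℕ} (hxy : x ≤ y) (hyt : y ≤ t) :
    ncG d W a y t ≤ ncG d W a x t := by
  apply le_conv
  intro τ h1 h2
  refine le_trans (conv_le (τ := max τ y) (le_max_right _ _) (max_le h2 hyt)) ?_
  refine add_le_add ?_ (ncS_mono_left (le_max_left _ _))
  exact iInf_mono fun n => convPow_start_mono hxy n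

lemma convPow_left_split :
    ∀ (m : ℕ) {x y τ' : ℕ}, x ≤ y → y ≤ τ' →
      convPow (ncF d W a) (m+1) x τ' ≤ ncF d W a x y + convPow (ncF d W a) m y τ' := by
  intro m
  induction m with
  | zero =>
    intro x y τ' hxy hyτ
    rcases eq_or_lt_of_le hyτ with rfl | hlt
    · rw [show convPow (ncF d W a) 0 y y = delta y y from rfl, delta_of_le le_rfl, add_zero]
      refine le_trans (conv_le (τ := x) le_rfl hxy) ?_
      rw [show convPow (ncF d W a) 0 x x = delta x x from rfl, delta_of_le le_rfl, zero_add]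
    · rw [show convPow (ncF d W a) 0 y τ' = delta y τ' from rfl, delta_of_lt hlt]
      simp
  | succ m ih =>
    intro x y τ' hxy hyτ
    rw [convPow_succ, convPow_succ]
    show convPow (ncF d W a) (m+2) x τ' ≤
      ncF d W a x y + ⨅ ρ ∈ Finset.Icc y τ', (convPow (ncF d W a) m y ρ + ncF d W a ρ τ')
    rw [const_add_biInf]
    refine le_iInf₂ fun ρ hρ => ?_
    obtain ⟨hρ1, hρ2⟩ := Finset.mem_Icc.mp hρ
    refine le_trans (conv_le (τ := ρ) (hxy.trans hρ1) hρ2) ?_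
    calc convPow (ncF d W a) (m+1) x ρ + ncF d W a ρ τ'
        ≤ (ncF d W a x y + convPow (ncF d W a) m y ρ) + ncF d W a ρ τ' :=
          add_le_add_left (ih hxy hρ1) _
      _ = ncF d W a x y + (convPow (ncF d W a) m y ρ + ncF d W a ρ τ') := add_assoc _ _ _

lemma subClosure_split {x y τ' : ℕ} (hxy : x ≤ y) (hyτ : y ≤ τ') :
    subClosure (ncF d W a) x τ' ≤ ncF d W a x y + subClosure (ncF d W a) y τ' := by
  unfold subClosure
  rw [ENNReal.add_iInf]
  exact le_iInf fun m => le_trans (iInf_le _ (m+1)) (convPow_left_split m hxy hyτ)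

lemma ncG_comp {σ₁ σ t : ℕ} (h1 : σ₁ ≤ σ) (h2 : σ ≤ t) :
    ncG d W a σ₁ t ≤ ncF d W a σ₁ σ + ncG d W a σ t := by
  show ncG d W a σ₁ t ≤ ncF d W a σ₁ σ +
    ⨅ τ' ∈ Finset.Icc σ t, (subClosure (ncF d W a) σ τ' + ncS a τ' t)
  rw [const_add_biInf]
  refine le_iInf₂ fun τ' hτ' => ?_
  obtain ⟨hτ1, hτ2⟩ := Finset.mem_Icc.mp hτ'
  refine le_trans (ncG_le (h1.trans hτ1) hτ2) ?_
  calc subClosure (ncF d W a) σ₁ τ' + ncS a τ' t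
      ≤ (ncF d W a σ₁ σ + subClosure (ncF d W a) σ τ') + ncS a τ' t :=
        add_le_add_left (subClosure_split h1 hτ1) _
    _ = ncF d W a σ₁ σ + (subClosure (ncF d W a) σ τ' + ncS a τ' t) := add_assoc _ _ _

lemma ncG_Q (hd : 0 < d) {s t X : ℕ} (hX1 : 1 ≤ X) (hXt : s + X ≤ t) :
    ∀ n σ, s ≤ σ → σ ≤ t →
      min (ncS a s (s+X) + ncG d W a (s+X) t)
        (⨅ b ∈ Finset.Ico (s+X) (s+X+d), (W + ncG d W a b t))
      ≤ convPow (ncF d W a) (n+1) s σ + ncG d W a σ t := by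
  intro n
  induction n using Nat.strong_induction_on with
  | _ n ih =>
    intro σ hσ1 hσ2
    rw [convPow_succ]
    show _ ≤ (⨅ σ₁ ∈ Finset.Icc s σ, (convPow (ncF d W a) n s σ₁ + ncF d W a σ₁ σ))
        + ncG d W a σ t
    rw [biInf_add_const]
    refine le_iInf₂ fun σ₁ hσ₁ => ?_
    obtain ⟨h11, h12⟩ := Finset.mem_Icc.mp hσ₁
    by_cases hcase : σ < s + X + d
    · -- the last gap touches the first block: use the b-branch
      have hWtail : W + ncG d W a σ t ≤
          convPow (ncF d W a) n s σ₁ + ncF d W a σ₁ σ + ncG d W a σ t := by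
        rw [add_assoc]
        exact le_trans (add_le_add_left (ncF_ge_W (a := a) (d := d)) _) le_add_self
      rcases le_or_gt σ (s+X) with hc2 | hc2
      · refine le_trans (min_le_right _ _) ?_
        refine le_trans (iInf₂_le (s+X) (Finset.mem_Ico.mpr ⟨le_rfl, by omega⟩)) ?_
        have hmono : ncG d W a (s+X) t ≤ ncG d W a σ t := ncG_start_mono hc2 hXt
        exact le_trans (add_le_add_right hmono W) hWtail
      · refine le_trans (min_le_right _ _) ?_
        refine le_trans (iInf₂_le σ (Finset.mem_Ico.mpr ⟨by omega, by omega⟩)) ?_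
        exact hWtail
    · -- σ ≥ s + X + d
      push_neg at hcase
      match n with
      | 0 =>
        rcases le_or_gt σ₁ s with hc2 | hc2
        · have hσ₁s : σ₁ = s := le_antisymm hc2 h11
          subst hσ₁s
          rw [show convPow (ncF d W a) 0 σ₁ σ₁ = delta σ₁ σ₁ from rfl, delta_of_le le_rfl,
            zero_add]
          refine le_trans (min_le_left _ _) ?_
          have hcomp : ncG d W a (σ₁+X) t ≤ ncF d W a (σ₁+X) σ + ncG d W a σ t :=
            ncG_comp (by omega) hσ2
          refine le_trans (add_le_add_right hcomp _) ?_
          refine le_of_eq ?_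
          rw [ncF_eq (show σ₁ + X ≤ σ by omega), ncF_eq (show σ₁ ≤ σ by omega),
            ← ncS_add (show σ₁ ≤ σ₁ + X by omega) (show σ₁ + X ≤ σ - d by omega)]
          abel
        · rw [show convPow (ncF d W a) 0 s σ₁ = delta s σ₁ from rfl, delta_of_lt hc2]
          simp
      | (n'+1) =>
        refine le_trans (ih n' (by omega) σ₁ h11 (h12.trans hσ2)) ?_
        refine le_trans (add_le_add_right (ncG_comp h12 hσ2) _) ?_
        exact le_of_eq (add_assoc _ _ _).symm

lemma ncG_lb (hd : 0 < d) {s t X : ℕ} (hX1 : 1 ≤ X) (hXt : s + X ≤ t) :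
    min (ncS a s (s+X) + ncG d W a (s+X) t)
      (⨅ b ∈ Finset.Ico (s+X) (s+X+d), (W + ncG d W a b t))
    ≤ ncG d W a s t := by
  apply le_conv
  intro τ h1 h2
  show _ ≤ (⨅ n, convPow (ncF d W a) n s τ) + ncS a τ t
  rw [ENNReal.iInf_add]
  refine le_iInf fun n => ?_
  match n with
  | 0 =>
    rcases eq_or_lt_of_le h1 with rfl | hlt
    · rw [show convPow (ncF d W a) 0 s s = delta s s from rfl, delta_of_le le_rfl, zero_add]
      refine le_trans (min_le_left _ _) ?_
      refine le_trans (add_le_add_right (ncG_le_ncS hXt) _) ?_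
      rw [ncS_add (by omega) hXt]
    · rw [show convPow (ncF d W a) 0 s τ = delta s τ from rfl, delta_of_lt hlt]
      simp
  | (n+1) =>
    refine le_trans (ncG_Q hd hX1 hXt n τ h1 h2) ?_
    exact add_le_add_right (ncG_le_ncS h2) _

end Pathwise

section ExpNeg

variable {θ : ℝ} {x y : ℝ≥0∞}

lemma expNeg_top : expNeg θ ∞ = 0 := if_pos rfl

lemma expNeg_zero : expNeg θ 0 = 1 := by
  simp [expNeg]

lemma expNeg_coe (r : ℝ≥0) : expNeg θ (r : ℝ≥0∞) = ENNReal.ofReal (Real.exp (-θ * r)) := by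
  rw [expNeg, if_neg (ENNReal.coe_ne_top), ENNReal.coe_toReal]

lemma expNeg_ofReal {w : ℝ} (hw : 0 ≤ w) :
    expNeg θ (ENNReal.ofReal w) = ENNReal.ofReal (Real.exp (-θ * w)) := by
  rw [expNeg, if_neg ENNReal.ofReal_ne_top, ENNReal.toReal_ofReal hw]

lemma expNeg_le_one (hθ : 0 ≤ θ) : expNeg θ x ≤ 1 := by
  rw [expNeg]
  split_ifs with h
  · exact zero_le_one
  · rw [ENNReal.ofReal_le_one, Real.exp_le_one_iff]
    have := ENNReal.toReal_nonneg (a := x)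
    nlinarith

lemma expNeg_add : expNeg θ (x + y) = expNeg θ x * expNeg θ y := by
  by_cases hx : x = ∞
  · simp [expNeg, hx]
  by_cases hy : y = ∞
  · simp [expNeg, hy]
  have hxy : x + y ≠ ∞ := ENNReal.add_ne_top.mpr ⟨hx, hy⟩
  rw [expNeg, expNeg, expNeg, if_neg hxy, if_neg hx, if_neg hy,
    ← ENNReal.ofReal_mul (Real.exp_nonneg _), ← Real.exp_add, ENNReal.toReal_add hx hy]
  ring_nf

lemma expNeg_anti (hθ : 0 ≤ θ) (h : x ≤ y) : expNeg θ y ≤ expNeg θ x := by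
  by_cases hy : y = ∞
  · rw [hy, expNeg_top]; exact zero_le
  have hx : x ≠ ∞ := ne_top_of_le_ne_top hy h
  rw [expNeg, expNeg, if_neg hx, if_neg hy]
  apply ENNReal.ofReal_le_ofReal
  apply Real.exp_le_exp.mpr
  have := ENNReal.toReal_mono hy h
  nlinarith

lemma expNeg_min {A B : ℝ≥0∞} : expNeg θ (min A B) ≤ expNeg θ A + expNeg θ B := by
  rcases min_cases A B with ⟨h1, _⟩ | ⟨h1, _⟩ <;> rw [h1]
  · exact le_self_add
  · exact le_add_self

lemma expNeg_biInf_le {s : Finset ℕ} (hs : s.Nonempty) (h : ℕ → ℝ≥0∞) :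
    expNeg θ (⨅ b ∈ s, h b) ≤ ∑ b ∈ s, expNeg θ (h b) := by
  obtain ⟨b0, hb0, heq⟩ := Finset.exists_mem_eq_inf s hs h
  rw [← Finset.inf_eq_iInf, heq]
  exact Finset.single_le_sum (f := fun b => expNeg θ (h b)) (fun i _ => zero_le) hb0

lemma expNeg_sum (s : Finset ℕ) (g : ℕ → ℝ≥0∞) :
    expNeg θ (∑ k ∈ s, g k) = ∏ k ∈ s, expNeg θ (g k) := by
  induction s using Finset.cons_induction with
  | empty => simp [expNeg_zero]
  | cons k s hk ih => rw [Finset.sum_cons, Finset.prod_cons, expNeg_add, ih]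

lemma measurable_expNeg : Measurable (expNeg θ) := by
  have h1 : Measurable fun x : ℝ≥0∞ => ENNReal.ofReal (Real.exp (-θ * x.toReal)) :=
    ENNReal.measurable_ofReal.comp (Real.measurable_exp.comp
      (measurable_const.mul ENNReal.measurable_toReal))
  exact Measurable.ite (measurableSet_eq) measurable_const h1

end ExpNeg

section Congr

variable {a a' : ℕ → ℝ≥0∞} {d : ℕ} {W : ℝ≥0∞} {v t : ℕ}

lemma ncS_congr (hcong : ∀ k, v ≤ k → k < t → a k = a' k) {u u' : ℕ} (hu : v ≤ u)
    (hu' : u' ≤ t) : ncS a u u' = ncS a' u u' :=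
  Finset.sum_congr rfl fun k hk => by
    obtain ⟨h1, h2⟩ := Finset.mem_Ico.mp hk
    exact hcong k (le_trans hu h1) (lt_of_lt_of_le h2 hu')

lemma ncF_congr (hcong : ∀ k, v ≤ k → k < t → a k = a' k) {x y : ℕ} (hx : v ≤ x)
    (hy : y ≤ t) : ncF d W a x y = ncF d W a' x y := by
  rcases le_or_gt x y with h | h
  · rw [ncF_eq h, ncF_eq h, ncS_congr hcong hx (le_trans (Nat.sub_le y d) hy)]
  · rw [show ncF d W a x y = ∞ from conv_top h, show ncF d W a' x y = ∞ from conv_top h]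

lemma convPow_congr (hcong : ∀ k, v ≤ k → k < t → a k = a' k) :
    ∀ n {x τ : ℕ}, v ≤ x → τ ≤ t →
      convPow (ncF d W a) n x τ = convPow (ncF d W a') n x τ := by
  intro n
  induction n with
  | zero => intro x τ _ _; rw [convPow_zero, convPow_zero]
  | succ n ih =>
    intro x τ hx hτ
    rw [convPow_succ, convPow_succ]
    exact conv_congr (fun σ _ h2 => ih hx (h2.trans hτ))
      (fun σ h1 _ => ncF_congr hcong (hx.trans h1) hτ)

lemma ncG_congr (hcong : ∀ k, v ≤ k → k < t → a k = a' k) {x : ℕ} (hx : v ≤ x) :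
    ncG d W a x t = ncG d W a' x t := by
  show conv (subClosure (ncF d W a)) (ncS a) x t = conv (subClosure (ncF d W a')) (ncS a') x t
  unfold conv
  refine iInf_congr fun τ => iInf_congr fun hτ => ?_
  obtain ⟨h1, h2⟩ := Finset.mem_Icc.mp hτ
  have hsc : subClosure (ncF d W a) x τ = subClosure (ncF d W a') x τ := by
    unfold subClosure
    exact iInf_congr fun n => convPow_congr hcong n hx h2
  rw [hsc, ncS_congr hcong (hx.trans h1) le_rfl]

end Congr

section Meas

variable {Ω' : Type*} [MeasurableSpace Ω']

lemma measurable_biInf_fin {s : Finset ℕ} {F : Ω' → ℕ → ℝ≥0∞}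
    (hF : ∀ τ, Measurable fun ω => F ω τ) : Measurable fun ω => ⨅ τ ∈ s, F ω τ :=
  Measurable.iInf fun τ => Measurable.iInf fun _ => hF τ

lemma measurable_conv {f g : Ω' → ℕ → ℕ → ℝ≥0∞}
    (hf : ∀ s t, Measurable fun ω => f ω s t) (hg : ∀ s t, Measurable fun ω => g ω s t)
    (s t : ℕ) : Measurable fun ω => conv (f ω) (g ω) s t :=
  measurable_biInf_fin fun τ => (hf s τ).add (hg τ t)

variable {A : ℕ → Ω' → ℝ≥0∞}

lemma measurable_ncS (hA : ∀ k, Measurable (A k)) (s t : ℕ) : Measurable fun ω => ncS (fun k => A k ω) s t :=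
  Finset.measurable_sum _ fun k _ => hA k

lemma measurable_ncF (hA : ∀ k, Measurable (A k)) {d : ℕ} {W : ℝ≥0∞} (s t : ℕ) :
    Measurable fun ω => ncF d W (fun k => A k ω) s t :=
  measurable_conv (f := fun ω => conv (ncS fun k => A k ω) (deltaD d))
    (g := fun _ => deltaW W)
    (measurable_conv (f := fun ω => ncS fun k => A k ω) (g := fun _ => deltaD d)
      (measurable_ncS hA) (fun _ _ => measurable_const))
    (fun _ _ => measurable_const) s t

lemma measurable_convPow (hA : ∀ k, Measurable (A k)) {d : ℕ} {W : ℝ≥0∞} :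
    ∀ n s t, Measurable fun ω => convPow (ncF d W (fun k => A k ω)) n s t := by
  intro n
  induction n with
  | zero => intro s t; simp only [convPow_zero]; exact measurable_const
  | succ n ih =>
    intro s t
    simp only [convPow_succ]
    exact measurable_conv (f := fun ω => convPow (ncF d W (fun k => A k ω)) n)
      (g := fun ω => ncF d W (fun k => A k ω)) ih (measurable_ncF hA) s t

lemma measurable_ncG (hA : ∀ k, Measurable (A k)) {d : ℕ} {W : ℝ≥0∞} (s t : ℕ) :
    Measurable fun ω => ncG d W (fun k => A k ω) s t := by
  refine measurable_conv (f := fun ω => subClosure (ncF d W (fun k => A k ω)))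
    (g := fun ω => ncS (fun k => A k ω)) ?_ (measurable_ncS hA) s t
  intro s t
  exact Measurable.iInf fun n => measurable_convPow hA n s t

end Meas

section PathwiseB

variable {a : ℕ → ℝ≥0∞} {d : ℕ} {W : ℝ≥0∞}

lemma ncS_last {t : ℕ} (h : 1 ≤ t) : ncS a (t-1) t = a (t-1) := by
  have : Finset.Ico (t-1) t = {t-1} := by
    ext k
    simp only [Finset.mem_Ico, Finset.mem_singleton]
    omega
  rw [ncS, this, Finset.sum_singleton]

lemma ncF_min_mono {x σ τ : ℕ} (h : σ ≤ τ) :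
    ncF d W a (min σ x) (min τ x) ≤ ncF d W a σ τ := by
  rcases le_or_gt τ x with hc | hc
  · rw [min_eq_left hc, min_eq_left (h.trans hc)]
  · rw [min_eq_right hc.le]
    rcases le_or_gt x σ with hc2 | hc2
    · rw [min_eq_right hc2, ncF_eq le_rfl, ncS_zero (by omega), add_zero]
      exact ncF_ge_W
    · rw [min_eq_left hc2.le, ncF_eq hc2.le, ncF_eq h]
      exact add_le_add_right (ncS_mono_right (by omega)) _

lemma convPow_end_mono {s x : ℕ} (hs : s ≤ x) :
    ∀ n τ, convPow (ncF d W a) n s (min τ x) ≤ convPow (ncF d W a) n s τ := by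
  intro n
  induction n with
  | zero =>
    intro τ
    rw [convPow_zero]
    rcases le_or_gt τ s with hc | hc
    · rw [delta_of_le (le_trans (min_le_left _ _) hc), delta_of_le hc]
    · rw [delta_of_lt hc]
      exact le_top
  | succ n ih =>
    intro τ
    rw [convPow_succ]
    apply le_conv
    intro σ h1 h2
    refine le_trans (conv_le (τ := min σ x) (le_min h1 hs)
      (min_le_min h2 le_rfl)) ?_
    exact add_le_add (ih σ) (ncF_min_mono h2)

lemma ncG_end_mono {s x y : ℕ} (hs : s ≤ x) (hxy : x ≤ y) :
    ncG d W a s x ≤ ncG d W a s y := by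
  apply le_conv
  intro τ h1 h2
  show _ ≤ (⨅ n, convPow (ncF d W a) n s τ) + ncS a τ y
  rw [ENNReal.iInf_add]
  refine le_iInf fun n => ?_
  refine le_trans (conv_le (τ := min τ x) (le_min h1 hs) (min_le_right _ _)) ?_
  refine add_le_add (le_trans (subClosure_le_convPow (n := n)) (convPow_end_mono hs n τ)) ?_
  rcases le_or_gt τ x with hc | hc
  · rw [min_eq_left hc]
    exact ncS_mono_right hxy
  · rw [min_eq_right hc.le, ncS_zero le_rfl]
    exact zero_le

/-- Single-step pathwise recursion: peel the last time slot or the last gap. -/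
lemma ncG_step (hd : 0 < d) {s t : ℕ} (h : s < t) :
    min (a (t-1) + ncG d W a s (t-1)) (W + ncG d W a s (max (t-d) s))
      ≤ ncG d W a s t := by
  apply le_conv
  intro τ h1 h2
  show _ ≤ (⨅ n, convPow (ncF d W a) n s τ) + ncS a τ t
  rw [ENNReal.iInf_add]
  refine le_iInf fun n => ?_
  rcases lt_or_eq_of_le h2 with hτt | hτt
  · -- τ < t : last slot is plain arrival
    refine le_trans (min_le_left _ _) ?_
    have hsum : ncS a τ (t-1) + a (t-1) = ncS a τ t := by
      rw [← ncS_add (show τ ≤ t-1 by omega) (show t-1 ≤ t from Nat.sub_le t 1),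
        ncS_last (show 1 ≤ t by omega)]
    have hG : ncG d W a s (t-1) ≤ convPow (ncF d W a) n s τ + ncS a τ (t-1) := by
      refine le_trans (conv_le h1 (by omega)) ?_
      exact add_le_add_left (subClosure_le_convPow (n := n)) _
    calc a (t-1) + ncG d W a s (t-1)
        ≤ a (t-1) + (convPow (ncF d W a) n s τ + ncS a τ (t-1)) := add_le_add_right hG _
      _ = convPow (ncF d W a) n s τ + (ncS a τ (t-1) + a (t-1)) := by ring
      _ = convPow (ncF d W a) n s τ + ncS a τ t := by rw [hsum]
  · -- τ = t : the chain reaches t; last element is a gap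
    subst hτt
    rw [ncS_zero le_rfl, add_zero]
    match n with
    | 0 =>
      rw [convPow_zero, delta_of_lt h]
      exact le_top
    | (n+1) =>
      rw [convPow_succ]
      apply le_conv
      intro σ₁ hσ1 hσ2
      refine le_trans (min_le_right _ _) ?_
      rw [ncF_eq hσ2]
      rcases le_or_gt σ₁ (τ - d) with hc | hc
      · have hx : max (τ - d) s = τ - d := max_eq_left (le_trans hσ1 hc)
        rw [hx]
        have hG : ncG d W a s (τ-d) ≤ convPow (ncF d W a) n s σ₁ + ncS a σ₁ (τ-d) := by
          refine le_trans (conv_le hσ1 hc) ?_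
          exact add_le_add_left (subClosure_le_convPow (n := n)) _
        calc W + ncG d W a s (τ-d)
            ≤ W + (convPow (ncF d W a) n s σ₁ + ncS a σ₁ (τ-d)) := add_le_add_right hG _
          _ = convPow (ncF d W a) n s σ₁ + (W + ncS a σ₁ (τ-d)) := by ring
      · have hG2 : ncG d W a s (max (τ-d) s) ≤ convPow (ncF d W a) n s σ₁ := by
          refine le_trans (ncG_end_mono (le_max_right _ _) (max_le (by omega) hσ1)) ?_
          refine le_trans (conv_le hσ1 le_rfl) ?_
          rw [ncS_zero le_rfl, add_zero]
          exact subClosure_le_convPow (n := n)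
        calc W + ncG d W a s (max (τ-d) s)
            ≤ W + convPow (ncF d W a) n s σ₁ := add_le_add_right hG2 _
          _ ≤ convPow (ncF d W a) n s σ₁ + (W + ncS a σ₁ (τ-d)) := by
              rw [add_comm W]
              exact add_le_add_right le_self_add _

end PathwiseB

section Arith

/-- j-th term of the explicit super-solution of the feedback recursion. -/
noncomputable def cterm (d : ℕ) (Mc Ew : ℝ≥0∞) (q j : ℕ) : ℝ≥0∞ :=
  ((q - (d-1)*j).choose j : ℝ≥0∞) * Ew^j * Mc^(q - d*j)

noncomputable def cseq (d : ℕ) (Mc Ew : ℝ≥0∞) (q : ℕ) : ℝ≥0∞ :=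
  ∑ j ∈ Finset.range (q+1), cterm d Mc Ew q j

noncomputable def Dseq (d : ℕ) (Mc Ew : ℝ≥0∞) (L : ℕ) : ℝ≥0∞ :=
  cseq d Mc Ew L +
    ∑ p ∈ Finset.Ico 1 d, (if p ≤ L then Ew * cseq d Mc Ew (L - p) else 0)

variable {d : ℕ} {Mc Ew : ℝ≥0∞}

lemma dmul_split (hd : 0 < d) (j : ℕ) : d*j = (d-1)*j + j := by
  have h : d - 1 + 1 = d := Nat.succ_pred_eq_of_pos hd
  calc d*j = ((d-1)+1)*j := by rw [h]
    _ = (d-1)*j + j := by ring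

lemma cterm_zero_of_lt {q j : ℕ} (h : q < j) : cterm d Mc Ew q j = 0 := by
  have : (q - (d-1)*j).choose j = 0 :=
    Nat.choose_eq_zero_of_lt (lt_of_le_of_lt (Nat.sub_le _ _) h)
  simp [cterm, this]

lemma cseq_zero : cseq d Mc Ew 0 = 1 := by
  simp [cseq, cterm]

lemma cseq_ext {q Q : ℕ} (h : q + 1 ≤ Q) :
    cseq d Mc Ew q = ∑ j ∈ Finset.range Q, cterm d Mc Ew q j := by
  rw [cseq]
  refine Finset.sum_subset (Finset.range_subset_range.mpr h) fun j _ hj => ?_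
  simp only [Finset.mem_range, not_lt] at hj
  exact cterm_zero_of_lt (by omega)

lemma cterm_mc (hd : 0 < d) {q : ℕ} (hq : 1 ≤ q) (j : ℕ) :
    Mc * cterm d Mc Ew (q-1) j ≤ cterm d Mc Ew q j := by
  by_cases hdj : d*j + 1 ≤ q
  · have h1 : (q-1) - d*j + 1 = q - d*j := by omega
    have h2 : (q-1) - (d-1)*j ≤ q - (d-1)*j := by omega
    unfold cterm
    calc Mc * (((q-1 - (d-1)*j).choose j : ℝ≥0∞) * Ew^j * Mc^(q-1 - d*j))
        = ((q-1 - (d-1)*j).choose j : ℝ≥0∞) * Ew^j * Mc^(q-1 - d*j + 1) := by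
          rw [pow_succ]; ring
      _ = ((q-1 - (d-1)*j).choose j : ℝ≥0∞) * Ew^j * Mc^(q - d*j) := by rw [h1]
      _ ≤ ((q - (d-1)*j).choose j : ℝ≥0∞) * Ew^j * Mc^(q - d*j) := by
          gcongr
  · have hj1 : 1 ≤ j := by
      rcases Nat.eq_zero_or_pos j with rfl | h
      · omega
      · exact h
    have hsp := dmul_split hd j
    have hz : (q-1) - (d-1)*j < j := by omega
    unfold cterm
    rw [Nat.choose_eq_zero_of_lt hz]
    simp

lemma cterm_pascal (hd : 0 < d) {q : ℕ} (hq : d ≤ q) (j : ℕ) :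
    Mc * cterm d Mc Ew (q-1) j +
      (if j = 0 then 0 else Ew * cterm d Mc Ew (q-d) (j-1)) ≤ cterm d Mc Ew q j := by
  match j with
  | 0 =>
    rw [if_pos rfl, add_zero]
    exact cterm_mc (q := q) hd (by omega) 0
  | (j'+1) =>
    simp only [if_neg (Nat.succ_ne_zero j'), Nat.add_sub_cancel]
    have hsp := dmul_split hd (j'+1)
    have hsp' := dmul_split hd j'
    have hdd : d*(j'+1) = d*j' + d := by ring
    have hdd1 : (d-1)*(j'+1) = (d-1)*j' + (d-1) := by ring
    by_cases hA : d*(j'+1) + 1 ≤ q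
    · -- honest Pascal case
      have hn1 : 1 ≤ q - (d-1)*(j'+1) := by omega
      have i1 : q - 1 - d*(j'+1) + 1 = q - d*(j'+1) := by omega
      have i2 : q - 1 - (d-1)*(j'+1) = q - (d-1)*(j'+1) - 1 := by omega
      have i3 : q - d - (d-1)*j' = q - (d-1)*(j'+1) - 1 := by omega
      have i4 : q - d - d*j' = q - d*(j'+1) := by omega
      have hpas : (q - (d-1)*(j'+1) - 1).choose j' + (q - (d-1)*(j'+1) - 1).choose (j'+1)
          = (q - (d-1)*(j'+1)).choose (j'+1) := by
        obtain ⟨b, hb⟩ : ∃ b, q - (d-1)*(j'+1) = b + 1 := ⟨q - (d-1)*(j'+1) - 1, by omega⟩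
        rw [hb, Nat.add_sub_cancel, Nat.choose_succ_succ' b j']
      refine le_of_eq ?_
      unfold cterm
      rw [i2, i3, i4]
      calc Mc * (((q - (d-1)*(j'+1) - 1).choose (j'+1) : ℝ≥0∞) * Ew^(j'+1) * Mc^(q-1 - d*(j'+1)))
            + Ew * (((q - (d-1)*(j'+1) - 1).choose j' : ℝ≥0∞) * Ew^j' * Mc^(q - d*(j'+1)))
          = (((q - (d-1)*(j'+1) - 1).choose j' + (q - (d-1)*(j'+1) - 1).choose (j'+1) : ℕ) : ℝ≥0∞)
              * Ew^(j'+1) * Mc^(q - d*(j'+1)) := by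
            rw [← i1]
            push_cast
            rw [pow_succ Mc, pow_succ Ew]
            ring
        _ = ((q - (d-1)*(j'+1)).choose (j'+1) : ℝ≥0∞) * Ew^(j'+1) * Mc^(q - d*(j'+1)) := by
            rw [hpas]
    · push_neg at hA
      have hqd : q ≤ d*(j'+1) := by omega
      have hz1 : ((q-1) - (d-1)*(j'+1)).choose (j'+1) = 0 :=
        Nat.choose_eq_zero_of_lt (by omega)
      rcases eq_or_lt_of_le hqd with hqe | hql
      · -- q = d*(j'+1) : equality case
        have e2 : q - d - (d-1)*j' = j' := by omega
        have e3 : q - d - d*j' = 0 := by omega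
        have e4 : q - (d-1)*(j'+1) = j'+1 := by omega
        have e5 : q - d*(j'+1) = 0 := by omega
        unfold cterm
        rw [hz1, e2, e3, e4, e5, Nat.choose_self, Nat.choose_self]
        simp only [Nat.cast_zero, zero_mul, mul_zero, zero_add, Nat.cast_one, one_mul,
          pow_zero, mul_one]
        exact le_of_eq (pow_succ' Ew j').symm
      · -- q < d*(j'+1) : everything vanishes
        have hj' : 1 ≤ j' := by
          rcases Nat.eq_zero_or_pos j' with rfl | h
          · omega
          · exact h
        have hz2 : ((q-d) - (d-1)*j').choose j' = Nat.choose ((q-d) - (d-1)*j') j' := rfl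
        have hz2' : ((q-d) - (d-1)*j').choose j' = 0 :=
          Nat.choose_eq_zero_of_lt (by omega)
        unfold cterm
        rw [hz1, hz2']
        simp

lemma cseq_step1 (hd : 0 < d) {q : ℕ} (hq : 1 ≤ q) :
    Mc * cseq d Mc Ew (q-1) ≤ cseq d Mc Ew q := by
  rw [cseq, cseq, Finset.mul_sum, show q - 1 + 1 = q by omega]
  refine le_trans (Finset.sum_le_sum fun j _ => cterm_mc hd hq j) ?_
  exact Finset.sum_le_sum_of_subset (Finset.range_subset_range.mpr (by omega))

lemma cseq_step (hd : 0 < d) {q : ℕ} (hq : d ≤ q) :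
    Mc * cseq d Mc Ew (q-1) + Ew * cseq d Mc Ew (q-d) ≤ cseq d Mc Ew q := by
  have h1 : Mc * cseq d Mc Ew (q-1) ≤ ∑ j ∈ Finset.range (q+1), Mc * cterm d Mc Ew (q-1) j := by
    rw [cseq, Finset.mul_sum, show q - 1 + 1 = q by omega]
    exact Finset.sum_le_sum_of_subset (Finset.range_subset_range.mpr (by omega))
  have h2 : Ew * cseq d Mc Ew (q-d) ≤
      ∑ j ∈ Finset.range (q+1), (if j = 0 then 0 else Ew * cterm d Mc Ew (q-d) (j-1)) := by
    have hfun : ∀ i ∈ Finset.range (q-d+1),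
        (if i+1 = 0 then 0 else Ew * cterm d Mc Ew (q-d) (i+1-1)) = Ew * cterm d Mc Ew (q-d) i :=
      fun i _ => by rw [if_neg (Nat.succ_ne_zero i), Nat.add_sub_cancel]
    have e1 : ∑ j ∈ Finset.range (q-d+1+1),
        (if j = 0 then 0 else Ew * cterm d Mc Ew (q-d) (j-1)) = Ew * cseq d Mc Ew (q-d) := by
      rw [Finset.sum_range_succ', if_pos rfl, add_zero, Finset.sum_congr rfl hfun, cseq,
        Finset.mul_sum]
    rw [← e1]
    exact Finset.sum_le_sum_of_subset (Finset.range_subset_range.mpr (by omega))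
  calc Mc * cseq d Mc Ew (q-1) + Ew * cseq d Mc Ew (q-d)
      ≤ (∑ j ∈ Finset.range (q+1), Mc * cterm d Mc Ew (q-1) j)
        + ∑ j ∈ Finset.range (q+1), (if j = 0 then 0 else Ew * cterm d Mc Ew (q-d) (j-1)) :=
        add_le_add h1 h2
    _ = ∑ j ∈ Finset.range (q+1), (Mc * cterm d Mc Ew (q-1) j
        + (if j = 0 then 0 else Ew * cterm d Mc Ew (q-d) (j-1))) := by
        rw [← Finset.sum_add_distrib]
    _ ≤ ∑ j ∈ Finset.range (q+1), cterm d Mc Ew q j :=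
        Finset.sum_le_sum fun j _ => cterm_pascal hd hq j
    _ = cseq d Mc Ew q := rfl

lemma Dseq_zero : Dseq d Mc Ew 0 = 1 := by
  rw [Dseq, cseq_zero]
  have h : ∀ p ∈ Finset.Ico 1 d, (if p ≤ 0 then Ew * cseq d Mc Ew (0 - p) else 0) = 0 := by
    intro p hp
    obtain ⟨h1, _⟩ := Finset.mem_Ico.mp hp
    rw [if_neg (by omega)]
  rw [Finset.sum_congr rfl h, Finset.sum_const_zero, add_zero]

lemma Dseq_step (hd : 0 < d) {L : ℕ} (hL : 1 ≤ L) :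
    Mc * Dseq d Mc Ew (L-1) + Ew * Dseq d Mc Ew (L-d) ≤ Dseq d Mc Ew L := by
  have expand1 : Mc * Dseq d Mc Ew (L-1) = Mc * cseq d Mc Ew (L-1)
      + ∑ p ∈ Finset.Ico 1 d, Mc * (if p ≤ L-1 then Ew * cseq d Mc Ew (L-1-p) else 0) := by
    rw [Dseq, mul_add, Finset.mul_sum]
  rcases le_or_gt d L with hdL | hdL
  · -- L ≥ d
    have expand2 : Ew * Dseq d Mc Ew (L-d) = Ew * cseq d Mc Ew (L-d)
        + ∑ p ∈ Finset.Ico 1 d, Ew * (if p ≤ L-d then Ew * cseq d Mc Ew (L-d-p) else 0) := by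
      rw [Dseq, mul_add, Finset.mul_sum]
    have hhead : Mc * cseq d Mc Ew (L-1) + Ew * cseq d Mc Ew (L-d) ≤ cseq d Mc Ew L :=
      cseq_step hd hdL
    have hterm : ∀ p ∈ Finset.Ico 1 d,
        Mc * (if p ≤ L-1 then Ew * cseq d Mc Ew (L-1-p) else 0)
          + Ew * (if p ≤ L-d then Ew * cseq d Mc Ew (L-d-p) else 0)
        ≤ (if p ≤ L then Ew * cseq d Mc Ew (L-p) else 0) := by
      intro p hp
      obtain ⟨hp1, hp2⟩ := Finset.mem_Ico.mp hp
      rw [if_pos (show p ≤ L-1 by omega), if_pos (show p ≤ L by omega)]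
      rcases le_or_gt p (L-d) with hc | hc
      · rw [if_pos (show p ≤ L-d from hc)]
        have hs := cseq_step (d := d) (Mc := Mc) (Ew := Ew) hd (show d ≤ L - p by omega)
        rw [show L - p - 1 = L - 1 - p by omega, show L - p - d = L - d - p by omega] at hs
        calc Mc * (Ew * cseq d Mc Ew (L-1-p)) + Ew * (Ew * cseq d Mc Ew (L-d-p))
            = Ew * (Mc * cseq d Mc Ew (L-1-p) + Ew * cseq d Mc Ew (L-d-p)) := by ring
          _ ≤ Ew * cseq d Mc Ew (L-p) := mul_le_mul_right hs Ew
      · rw [if_neg (show ¬ p ≤ L-d by omega), mul_zero, add_zero]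
        have hs := cseq_step1 (d := d) (Mc := Mc) (Ew := Ew) hd (show 1 ≤ L - p by omega)
        rw [show L - p - 1 = L - 1 - p by omega] at hs
        calc Mc * (Ew * cseq d Mc Ew (L-1-p)) = Ew * (Mc * cseq d Mc Ew (L-1-p)) := by ring
          _ ≤ Ew * cseq d Mc Ew (L-p) := mul_le_mul_right hs Ew
    rw [expand1, expand2, Dseq]
    calc Mc * cseq d Mc Ew (L-1)
          + (∑ p ∈ Finset.Ico 1 d, Mc * (if p ≤ L-1 then Ew * cseq d Mc Ew (L-1-p) else 0))
        + (Ew * cseq d Mc Ew (L-d)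
          + ∑ p ∈ Finset.Ico 1 d, Ew * (if p ≤ L-d then Ew * cseq d Mc Ew (L-d-p) else 0))
        = (Mc * cseq d Mc Ew (L-1) + Ew * cseq d Mc Ew (L-d))
          + ((∑ p ∈ Finset.Ico 1 d, Mc * (if p ≤ L-1 then Ew * cseq d Mc Ew (L-1-p) else 0))
            + ∑ p ∈ Finset.Ico 1 d, Ew * (if p ≤ L-d then Ew * cseq d Mc Ew (L-d-p) else 0)) := by
          ring
      _ = (Mc * cseq d Mc Ew (L-1) + Ew * cseq d Mc Ew (L-d))
          + ∑ p ∈ Finset.Ico 1 d, (Mc * (if p ≤ L-1 then Ew * cseq d Mc Ew (L-1-p) else 0)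
            + Ew * (if p ≤ L-d then Ew * cseq d Mc Ew (L-d-p) else 0)) := by
          rw [← Finset.sum_add_distrib]
      _ ≤ cseq d Mc Ew L
          + ∑ p ∈ Finset.Ico 1 d, (if p ≤ L then Ew * cseq d Mc Ew (L-p) else 0) :=
          add_le_add hhead (Finset.sum_le_sum hterm)
  · -- 1 ≤ L < d
    have hLd : L - d = 0 := by omega
    rw [hLd, Dseq_zero, mul_one]
    have hterm : ∀ p ∈ Finset.Ico 1 d,
        Mc * (if p ≤ L-1 then Ew * cseq d Mc Ew (L-1-p) else 0) + (if p = L then Ew else 0)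
        ≤ (if p ≤ L then Ew * cseq d Mc Ew (L-p) else 0) := by
      intro p hp
      obtain ⟨hp1, hp2⟩ := Finset.mem_Ico.mp hp
      rcases le_or_gt p (L-1) with hc | hc
      · rw [if_pos (show p ≤ L-1 from hc), if_neg (show ¬ p = L by omega),
          if_pos (show p ≤ L by omega), add_zero]
        have hs := cseq_step1 (d := d) (Mc := Mc) (Ew := Ew) hd (show 1 ≤ L - p by omega)
        rw [show L - p - 1 = L - 1 - p by omega] at hs
        calc Mc * (Ew * cseq d Mc Ew (L-1-p)) = Ew * (Mc * cseq d Mc Ew (L-1-p)) := by ring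
          _ ≤ Ew * cseq d Mc Ew (L-p) := mul_le_mul_right hs Ew
      · rcases eq_or_lt_of_le (show L ≤ p by omega) with hpe | hpl
        · rw [if_neg (show ¬ p ≤ L-1 by omega), mul_zero, zero_add,
            if_pos (show p = L from hpe.symm), if_pos (show p ≤ L by omega),
            show L - p = 0 by omega, cseq_zero, mul_one]
        · rw [if_neg (show ¬ p ≤ L-1 by omega), if_neg (show ¬ p = L by omega),
            if_neg (show ¬ p ≤ L by omega), mul_zero, add_zero]
    have hsum : ∑ p ∈ Finset.Ico 1 d, (if p = L then Ew else 0) = Ew := by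
      rw [Finset.sum_ite_eq' (Finset.Ico 1 d) L (fun _ => Ew),
        if_pos (Finset.mem_Ico.mpr ⟨hL, hdL⟩)]
    rw [expand1, Dseq]
    calc Mc * cseq d Mc Ew (L-1)
          + (∑ p ∈ Finset.Ico 1 d, Mc * (if p ≤ L-1 then Ew * cseq d Mc Ew (L-1-p) else 0)) + Ew
        = Mc * cseq d Mc Ew (L-1)
          + ((∑ p ∈ Finset.Ico 1 d, Mc * (if p ≤ L-1 then Ew * cseq d Mc Ew (L-1-p) else 0))
            + ∑ p ∈ Finset.Ico 1 d, (if p = L then Ew else 0)) := by rw [hsum]; ring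
      _ = Mc * cseq d Mc Ew (L-1)
          + ∑ p ∈ Finset.Ico 1 d, (Mc * (if p ≤ L-1 then Ew * cseq d Mc Ew (L-1-p) else 0)
            + (if p = L then Ew else 0)) := by rw [← Finset.sum_add_distrib]
      _ ≤ cseq d Mc Ew L
          + ∑ p ∈ Finset.Ico 1 d, (if p ≤ L then Ew * cseq d Mc Ew (L-p) else 0) :=
          add_le_add (cseq_step1 hd hL) (Finset.sum_le_sum hterm)

/-- Pascal ladder. -/
lemma choose_ladder (j' : ℕ) :
    ∀ d n : ℕ, 0 < d → (n.choose (j'+1) + ∑ p ∈ Finset.Ico 1 d, (n + (d-1-p)).choose j')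
      = (n + (d-1)).choose (j'+1) := by
  intro d
  induction d with
  | zero => intro n h; omega
  | succ d ih =>
    intro n _
    rcases Nat.eq_zero_or_pos d with rfl | hd
    · simp
    · rw [Finset.sum_Ico_succ_top (by omega)]
      have hcongr : ∀ p ∈ Finset.Ico 1 d, (n + (d+1-1-p)).choose j' = ((n+1) + (d-1-p)).choose j' := by
        intro p hp
        obtain ⟨h1, h2⟩ := Finset.mem_Ico.mp hp
        congr 1
        omega
      rw [Finset.sum_congr rfl hcongr, show n + (d+1-1-d) = n by omega]
      have hpas : n.choose (j'+1) + n.choose j' = (n+1).choose (j'+1) := by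
        rw [Nat.choose_succ_succ' n j']
        omega
      calc n.choose (j'+1) + ((∑ p ∈ Finset.Ico 1 d, ((n+1) + (d-1-p)).choose j') + n.choose j')
          = (n+1).choose (j'+1) + ∑ p ∈ Finset.Ico 1 d, ((n+1) + (d-1-p)).choose j' := by omega
        _ = ((n+1) + (d-1)).choose (j'+1) := ih (n+1) hd
        _ = (n + (d+1-1)).choose (j'+1) := by congr 1; omega

/-- Counting lemma: the ladder total is at most `C(m,j) d^j`. -/
lemma desc_le (hd : 0 < d) (m j : ℕ) :
    ∀ k, k ≤ j → (m*d - (d-1)*(j-1)).descFactorial k ≤ d^k * m.descFactorial k := by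
  intro k
  induction k with
  | zero => intro _; simp
  | succ k ih =>
    intro hk
    rw [Nat.descFactorial_succ, Nat.descFactorial_succ]
    have hcomm : d*m = m*d := Nat.mul_comm d m
    have h3 : d*k = (d-1)*k + k := dmul_split hd k
    have h2 : (d-1)*k ≤ (d-1)*(j-1) := Nat.mul_le_mul_left _ (by omega)
    have hfac : (m*d - (d-1)*(j-1)) - k ≤ d * (m - k) := by
      rcases le_or_gt k m with hkm | hkm
      · have h1 : d * (m-k) + d*k = d*m := by
          have hmk : m - k + k = m := Nat.sub_add_cancel hkm
          calc d*(m-k) + d*k = d*((m-k)+k) := by ring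
            _ = d*m := by rw [hmk]
        omega
      · have h1 : m - k = 0 := by omega
        have h4 : d*m ≤ d*k := Nat.mul_le_mul_left _ (by omega)
        rw [h1, Nat.mul_zero]
        omega
    calc (m*d - (d-1)*(j-1) - k) * (m*d - (d-1)*(j-1)).descFactorial k
        ≤ (d*(m-k)) * (d^k * m.descFactorial k) := Nat.mul_le_mul hfac (ih (by omega))
      _ = d^(k+1) * ((m-k) * m.descFactorial k) := by ring

lemma choose_count (hd : 0 < d) (m j : ℕ) :
    (m*d - (d-1)*(j-1)).choose j ≤ m.choose j * d^j := by
  rw [Nat.choose_eq_descFactorial_div_factorial, Nat.choose_eq_descFactorial_div_factorial]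
  calc (m*d - (d-1)*(j-1)).descFactorial j / j.factorial
      ≤ (d^j * m.descFactorial j) / j.factorial :=
        Nat.div_le_div_right (desc_le hd m j j le_rfl)
    _ = d^j * (m.descFactorial j / j.factorial) :=
        Nat.mul_div_assoc _ (Nat.factorial_dvd_descFactorial m j)
    _ = m.descFactorial j / j.factorial * d^j := Nat.mul_comm _ _

lemma Dseq_le (hd : 0 < d) (hMc1 : Mc ≤ 1) {m : ℕ} (hm : 1 ≤ m) :
    Dseq d Mc Ew (m*d) ≤ (Mc^d + (d:ℝ≥0∞)*Ew)^m := by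
  have hdmd : d ≤ m*d := by
    calc d = 1*d := (one_mul d).symm
      _ ≤ m*d := Nat.mul_le_mul_right d hm
  have hmmd : m ≤ m*d := Nat.le_mul_of_pos_right m hd
  -- drop the ifs
  have hD : Dseq d Mc Ew (m*d) = cseq d Mc Ew (m*d)
      + ∑ p ∈ Finset.Ico 1 d, Ew * cseq d Mc Ew (m*d - p) := by
    rw [Dseq]
    congr 1
    refine Finset.sum_congr rfl fun p hp => ?_
    obtain ⟨h1, h2⟩ := Finset.mem_Ico.mp hp
    rw [if_pos (show p ≤ m*d by omega)]
  -- swap and shift the boundary double sum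
  have hfun : ∀ i ∈ Finset.range (m*d+1),
      (if i+1 = 0 then 0 else ∑ p ∈ Finset.Ico 1 d, Ew * cterm d Mc Ew (m*d-p) (i+1-1))
      = ∑ p ∈ Finset.Ico 1 d, Ew * cterm d Mc Ew (m*d-p) i :=
    fun i _ => by rw [if_neg (Nat.succ_ne_zero i), Nat.add_sub_cancel]
  have hswap : ∑ p ∈ Finset.Ico 1 d, Ew * cseq d Mc Ew (m*d - p)
      = ∑ j ∈ Finset.range (m*d+1+1), (if j = 0 then 0 else
          ∑ p ∈ Finset.Ico 1 d, Ew * cterm d Mc Ew (m*d-p) (j-1)) := by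
    rw [Finset.sum_range_succ', if_pos rfl, add_zero, Finset.sum_congr rfl hfun,
      Finset.sum_comm]
    refine Finset.sum_congr rfl fun p hp => ?_
    obtain ⟨h1, h2⟩ := Finset.mem_Ico.mp hp
    rw [cseq_ext (show (m*d-p)+1 ≤ m*d+1 by omega), Finset.mul_sum]
  have htot : Dseq d Mc Ew (m*d) = ∑ j ∈ Finset.range (m*d+1+1),
      (cterm d Mc Ew (m*d) j + (if j = 0 then 0 else
        ∑ p ∈ Finset.Ico 1 d, Ew * cterm d Mc Ew (m*d-p) (j-1))) := by
    rw [hD, hswap, cseq_ext (show m*d+1 ≤ m*d+1+1 by omega), ← Finset.sum_add_distrib]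
  -- per-bucket bound
  have hperj : ∀ j ∈ Finset.range (m*d+1+1),
      cterm d Mc Ew (m*d) j + (if j = 0 then 0 else
        ∑ p ∈ Finset.Ico 1 d, Ew * cterm d Mc Ew (m*d-p) (j-1))
      ≤ (m.choose j : ℝ≥0∞) * ((d:ℝ≥0∞)*Ew)^j * (Mc^d)^(m-j) := by
    intro j _
    match j with
    | 0 =>
      rw [if_pos rfl, add_zero]
      simp only [Nat.choose_zero_right, Nat.cast_one, pow_zero, one_mul, mul_one, Nat.sub_zero]
      have h0 : cterm d Mc Ew (m*d) 0 = Mc^(m*d) := by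
        simp [cterm]
      rw [h0, ← pow_mul, Nat.mul_comm]
    | (j'+1) =>
      rw [if_neg (Nat.succ_ne_zero j'), Nat.add_sub_cancel]
      have hsp := dmul_split hd (j'+1)
      have hsp' := dmul_split hd j'
      have hdd : d*(j'+1) = d*j' + d := by ring
      have hdd1 : (d-1)*(j'+1) = (d-1)*j' + (d-1) := by ring
      have hcomm : d*m = m*d := Nat.mul_comm d m
      by_cases hjm : j'+1 ≤ m
      · -- main case
        have hmul1 : d*(j'+1) ≤ d*m := Nat.mul_le_mul_left d hjm
        have hmul2 : (d-1)*(j'+1) ≤ (d-1)*m := Nat.mul_le_mul_left _ hjm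
        have hmul3 : (d-1)*m ≤ d*m := Nat.mul_le_mul_right m (by omega)
        have key1 : m*d - d*(j'+1) = d*(m-(j'+1)) := by
          have h1 : d*(m-(j'+1)) + d*(j'+1) = d*m := by
            have hmk : m - (j'+1) + (j'+1) = m := Nat.sub_add_cancel hjm
            calc d*(m-(j'+1)) + d*(j'+1) = d*((m-(j'+1))+(j'+1)) := by ring
              _ = d*m := by rw [hmk]
          omega
        have harg : ∀ p ∈ Finset.Ico 1 d,
            (m*d - p) - (d-1)*j' = (m*d - (d-1)*(j'+1)) + (d-1-p) := by
          intro p hp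
          obtain ⟨h1, h2⟩ := Finset.mem_Ico.mp hp
          omega
        have hexp : ∀ p ∈ Finset.Ico 1 d, Mc^((m*d-p) - d*j') ≤ Mc^(m*d - d*(j'+1)) := by
          intro p hp
          obtain ⟨h1, h2⟩ := Finset.mem_Ico.mp hp
          exact pow_le_pow_of_le_one zero_le hMc1 (by omega)
        have hcnt : (m*d - (d-1)*(j'+1)).choose (j'+1)
            + ∑ p ∈ Finset.Ico 1 d, ((m*d - (d-1)*(j'+1)) + (d-1-p)).choose j'
            ≤ m.choose (j'+1) * d^(j'+1) := by
          rw [choose_ladder j' d (m*d - (d-1)*(j'+1)) hd,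
            show (m*d - (d-1)*(j'+1)) + (d-1) = m*d - (d-1)*j' by omega]
          have hc := choose_count hd m (j'+1)
          rwa [Nat.add_sub_cancel] at hc
        calc cterm d Mc Ew (m*d) (j'+1)
              + ∑ p ∈ Finset.Ico 1 d, Ew * cterm d Mc Ew (m*d-p) j'
            ≤ ((m*d - (d-1)*(j'+1)).choose (j'+1) : ℝ≥0∞) * Ew^(j'+1) * Mc^(m*d - d*(j'+1))
              + ∑ p ∈ Finset.Ico 1 d, (((m*d - (d-1)*(j'+1)) + (d-1-p)).choose j' : ℝ≥0∞)
                  * Ew^(j'+1) * Mc^(m*d - d*(j'+1)) := by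
              refine add_le_add (le_of_eq (by simp only [cterm])) ?_
              refine Finset.sum_le_sum fun p hp => ?_
              simp only [cterm]
              rw [harg p hp]
              calc Ew * ((((m*d - (d-1)*(j'+1)) + (d-1-p)).choose j' : ℝ≥0∞) * Ew^j'
                    * Mc^((m*d-p) - d*j'))
                  = (((m*d - (d-1)*(j'+1)) + (d-1-p)).choose j' : ℝ≥0∞) * Ew^(j'+1)
                    * Mc^((m*d-p) - d*j') := by rw [pow_succ]; ring
                _ ≤ (((m*d - (d-1)*(j'+1)) + (d-1-p)).choose j' : ℝ≥0∞) * Ew^(j'+1)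
                    * Mc^(m*d - d*(j'+1)) := mul_le_mul_right (hexp p hp) _
          _ = (((m*d - (d-1)*(j'+1)).choose (j'+1)
                + ∑ p ∈ Finset.Ico 1 d, ((m*d - (d-1)*(j'+1)) + (d-1-p)).choose j' : ℕ) : ℝ≥0∞)
              * Ew^(j'+1) * Mc^(m*d - d*(j'+1)) := by
              push_cast
              rw [add_mul, add_mul, Finset.sum_mul, Finset.sum_mul]
          _ ≤ ((m.choose (j'+1) * d^(j'+1) : ℕ) : ℝ≥0∞) * Ew^(j'+1) * Mc^(m*d - d*(j'+1)) := by
              have hcast : (((m*d - (d-1)*(j'+1)).choose (j'+1)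
                  + ∑ p ∈ Finset.Ico 1 d, ((m*d - (d-1)*(j'+1)) + (d-1-p)).choose j' : ℕ) : ℝ≥0∞)
                  ≤ ((m.choose (j'+1) * d^(j'+1) : ℕ) : ℝ≥0∞) := by exact_mod_cast hcnt
              exact mul_le_mul_left (mul_le_mul_left hcast _) _
          _ = (m.choose (j'+1) : ℝ≥0∞) * ((d:ℝ≥0∞)*Ew)^(j'+1) * (Mc^d)^(m-(j'+1)) := by
              rw [key1, ← pow_mul, mul_pow]
              push_cast
              ring
      · -- vanishing buckets
        push_neg at hjm
        have hz0 : (m*d - (d-1)*(j'+1)).choose (j'+1) = 0 := by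
          apply Nat.choose_eq_zero_of_lt
          have hmul : d*(m+1) ≤ d*(j'+1) := Nat.mul_le_mul_left d (by omega)
          have hdd2 : d*(m+1) = d*m + d := by ring
          omega
        have hzp : ∀ p ∈ Finset.Ico 1 d, Ew * cterm d Mc Ew (m*d-p) j' = 0 := by
          intro p hp
          obtain ⟨h1, h2⟩ := Finset.mem_Ico.mp hp
          have hz : ((m*d-p) - (d-1)*j').choose j' = 0 := by
            apply Nat.choose_eq_zero_of_lt
            have hmul : d*m ≤ d*j' := Nat.mul_le_mul_left d (by omega)
            omega
          simp [cterm, hz]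
        have hL1 : cterm d Mc Ew (m*d) (j'+1) = 0 := by simp [cterm, hz0]
        rw [hL1, Finset.sum_congr rfl hzp, Finset.sum_const_zero, add_zero,
          Nat.choose_eq_zero_of_lt (by omega)]
        simp
  -- sum the buckets and recognize the binomial expansion
  calc Dseq d Mc Ew (m*d)
      ≤ ∑ j ∈ Finset.range (m*d+1+1),
          (m.choose j : ℝ≥0∞) * ((d:ℝ≥0∞)*Ew)^j * (Mc^d)^(m-j) := by
        rw [htot]
        exact Finset.sum_le_sum hperj
    _ = ∑ j ∈ Finset.range (m+1), (m.choose j : ℝ≥0∞) * ((d:ℝ≥0∞)*Ew)^j * (Mc^d)^(m-j) := by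
        symm
        refine Finset.sum_subset (Finset.range_subset_range.mpr (by omega)) fun j _ hj => ?_
        simp only [Finset.mem_range, not_lt] at hj
        rw [Nat.choose_eq_zero_of_lt (by omega)]
        simp
    _ = (Mc^d + (d:ℝ≥0∞)*Ew)^m := by
        rw [add_comm (Mc^d), add_pow]
        refine Finset.sum_congr rfl fun j _ => ?_
        ring

end Arith

/-- MGF bound for the i.i.d. feedback system:
E[e^{−θ S_win(s,t)}] ≤ (M_c(−θ)^d + d e^{−θw})^{⌊(t−s)/d⌋}. -/
theorem mgf_bound_iid_feedback {Ω : Type*} [MeasurableSpace Ω] (μ : Measure Ω)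
    [IsProbabilityMeasure μ] (c : ℕ → Ω → ℝ≥0)
    (hmeas : ∀ k, Measurable (c k))
    (hindep : ProbabilityTheory.iIndepFun c μ)
    (hident : ∀ k, μ.map (c k) = μ.map (c 0))
    (d : ℕ) (hd : 0 < d) (w : ℝ) (hw : 0 < w) (θ : ℝ) (hθ : 0 < θ)
    (S : Ω → ℕ → ℕ → ℝ≥0∞)
    (hS : ∀ ω s t, S ω s t = ∑ k ∈ Finset.Ico s t, (c k ω : ℝ≥0∞))
    (Mc : ℝ≥0∞) (hMc : Mc = ∫⁻ ω, ENNReal.ofReal (Real.exp (-θ * (c 0 ω : ℝ))) ∂μ) :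
    ∀ s t : ℕ, s ≤ t →
      (∫⁻ ω, expNeg θ
          (conv (subClosure (conv (conv (S ω) (deltaD d)) (deltaW (ENNReal.ofReal w)))) (S ω) s t) ∂μ)
        ≤ (Mc ^ d + (d : ℝ≥0∞) * ENNReal.ofReal (Real.exp (-θ * w))) ^ ((t - s) / d) := by
  set W : ℝ≥0∞ := ENNReal.ofReal w with hWdef
  set Ew : ℝ≥0∞ := ENNReal.ofReal (Real.exp (-θ * w)) with hEwdef
  set K : ℝ≥0∞ := Mc ^ d + (d : ℝ≥0∞) * Ew with hKdef
  set A : ℕ → Ω → ℝ≥0∞ := fun k ω => ((c k ω : ℝ≥0) : ℝ≥0∞) with hAdef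
  have hAmeas : ∀ k, Measurable (A k) :=
    fun k => measurable_coe_nnreal_ennreal.comp (hmeas k)
  have hGmeas : ∀ x t : ℕ, Measurable fun ω => ncG d W (fun k => A k ω) x t :=
    fun x t => measurable_ncG hAmeas x t
  have hIntMeas : ∀ x t : ℕ, Measurable fun ω => expNeg θ (ncG d W (fun k => A k ω) x t) :=
    fun x t => measurable_expNeg.comp (hGmeas x t)
  set Φ : ℕ → ℕ → ℝ≥0∞ :=
    fun x t => ∫⁻ ω, expNeg θ (ncG d W (fun k => A k ω) x t) ∂μ with hΦdef
  have hΦ : ∀ x t : ℕ, Φ x t = ∫⁻ ω, expNeg θ (ncG d W (fun k => A k ω) x t) ∂μ :=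
    fun x t => by rw [hΦdef]
  -- Φ ≤ 1
  have hΦ1 : ∀ x t : ℕ, Φ x t ≤ 1 := by
    intro x t
    rw [hΦ]
    calc ∫⁻ ω, expNeg θ (ncG d W (fun k => A k ω) x t) ∂μ
        ≤ ∫⁻ _ω, 1 ∂μ := lintegral_mono fun ω => expNeg_le_one hθ.le
      _ = 1 := by simp
  -- identical marginal MGFs
  have hfm : Measurable fun r : ℝ≥0 => ENNReal.ofReal (Real.exp (-θ * (r : ℝ))) :=
    ENNReal.measurable_ofReal.comp (Real.measurable_exp.comp
      (measurable_const.mul measurable_coe_nnreal_real))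
  have hMck : ∀ k, (∫⁻ ω, ENNReal.ofReal (Real.exp (-θ * (c k ω : ℝ))) ∂μ) = Mc := by
    intro k
    calc (∫⁻ ω, ENNReal.ofReal (Real.exp (-θ * (c k ω : ℝ))) ∂μ)
        = ∫⁻ x, ENNReal.ofReal (Real.exp (-θ * (x : ℝ))) ∂(μ.map (c k)) :=
          (lintegral_map hfm (hmeas k)).symm
      _ = ∫⁻ x, ENNReal.ofReal (Real.exp (-θ * (x : ℝ))) ∂(μ.map (c 0)) := by rw [hident k]
      _ = ∫⁻ ω, ENNReal.ofReal (Real.exp (-θ * (c 0 ω : ℝ))) ∂μ := lintegral_map hfm (hmeas 0)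
      _ = Mc := hMc.symm
  have hMc1 : Mc ≤ 1 := by
    rw [hMc]
    calc (∫⁻ ω, ENNReal.ofReal (Real.exp (-θ * (c 0 ω : ℝ))) ∂μ)
        ≤ ∫⁻ _ω, 1 ∂μ := by
          refine lintegral_mono fun ω => ?_
          rw [ENNReal.ofReal_le_one, Real.exp_le_one_iff]
          have h1 : (0:ℝ) ≤ (c 0 ω : ℝ) := (c 0 ω).coe_nonneg
          nlinarith
      _ = 1 := by simp
  -- independence splitting : peel the last coordinate
  have hsplit1 : ∀ s t : ℕ, s < t →
      (∫⁻ ω, expNeg θ (ncG d W (fun k => A k ω) s (t-1)) * expNeg θ (A (t-1) ω) ∂μ)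
        = Φ s (t-1) * Mc := by
    intro s t hst
    set T : Finset ℕ := Finset.Ico s (t-1) with hTdef
    set ext : ({x // x ∈ T} → ℝ≥0) → ℕ → ℝ≥0∞ :=
      fun y k => if h : k ∈ T then ((y ⟨k, h⟩ : ℝ≥0) : ℝ≥0∞) else 0 with hextdef
    have hextMeas : ∀ k, Measurable fun y : {x // x ∈ T} → ℝ≥0 => ext y k := by
      intro k
      by_cases h : k ∈ T
      · simp only [hextdef, dif_pos h]
        exact measurable_coe_nnreal_ennreal.comp (measurable_pi_apply _)
      · simp only [hextdef, dif_neg h]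
        exact measurable_const
    set ψ : ({x // x ∈ T} → ℝ≥0) → ℝ≥0∞ := fun y =>
      expNeg θ (ncG d W (fun k => ext y k) s (t-1)) with hψdef
    have hψm : Measurable ψ := measurable_expNeg.comp (measurable_ncG hextMeas s (t-1))
    set φ : ({x // x ∈ ({t-1} : Finset ℕ)} → ℝ≥0) → ℝ≥0∞ := fun y =>
      ENNReal.ofReal (Real.exp (-θ * ((y ⟨t-1, Finset.mem_singleton_self _⟩ : ℝ≥0) : ℝ))) with hφdef
    have hφm : Measurable φ :=
      ENNReal.measurable_ofReal.comp (Real.measurable_exp.comp (measurable_const.mul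
        (measurable_coe_nnreal_real.comp (measurable_pi_apply _))))
    have hdisj : Disjoint T ({t-1} : Finset ℕ) := by
      simp only [Finset.disjoint_right, Finset.mem_singleton, hTdef]
      rintro x rfl
      simp only [Finset.mem_Ico]
      omega
    have hIndep :=
      ProbabilityTheory.IndepFun.comp
        (hindep.indepFun_finset T {t-1} hdisj hmeas) hψm hφm
    have htup1 : Measurable fun ω (i : {x // x ∈ T}) => c i ω :=
      measurable_pi_lambda _ fun i => hmeas i
    have htup2 : Measurable fun ω (i : {x // x ∈ ({t-1} : Finset ℕ)}) => c i ω :=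
      measurable_pi_lambda _ fun i => hmeas i
    have hY : ∀ ω : Ω, (ψ ∘ fun ω (i : {x // x ∈ T}) => c i ω) ω
        = expNeg θ (ncG d W (fun k => A k ω) s (t-1)) := by
      intro ω
      have hext : ∀ k, s ≤ k → k < t-1 → ext (fun i : {x // x ∈ T} => c i ω) k = A k ω := by
        intro k h1 h2
        have hkT : k ∈ T := by rw [hTdef]; exact Finset.mem_Ico.mpr ⟨h1, h2⟩
        simp only [hextdef, dif_pos hkT, hAdef]
      simp only [Function.comp, hψdef]
      exact congrArg (expNeg θ) (ncG_congr hext le_rfl)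
    have hX : ∀ ω : Ω, (φ ∘ fun ω (i : {x // x ∈ ({t-1} : Finset ℕ)}) => c i ω) ω
        = expNeg θ (A (t-1) ω) := by
      intro ω
      simp only [Function.comp, hφdef, hAdef, expNeg_coe]
    calc (∫⁻ ω, expNeg θ (ncG d W (fun k => A k ω) s (t-1)) * expNeg θ (A (t-1) ω) ∂μ)
        = ∫⁻ ω, ((ψ ∘ fun ω (i : {x // x ∈ T}) => c i ω) *
            (φ ∘ fun ω (i : {x // x ∈ ({t-1} : Finset ℕ)}) => c i ω)) ω ∂μ := by
          refine lintegral_congr fun ω => ?_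
          rw [Pi.mul_apply, hY, hX]
      _ = (∫⁻ ω, (ψ ∘ fun ω (i : {x // x ∈ T}) => c i ω) ω ∂μ) *
          ∫⁻ ω, (φ ∘ fun ω (i : {x // x ∈ ({t-1} : Finset ℕ)}) => c i ω) ω ∂μ :=
          ProbabilityTheory.lintegral_mul_eq_lintegral_mul_lintegral_of_indepFun
            (hψm.comp htup1) (hφm.comp htup2) hIndep
      _ = Φ s (t-1) * Mc := by
          congr 1
          · rw [hΦ]
            exact lintegral_congr fun ω => hY ω
          · calc (∫⁻ ω, (φ ∘ fun ω (i : {x // x ∈ ({t-1} : Finset ℕ)}) => c i ω) ω ∂μ)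
                = ∫⁻ ω, ENNReal.ofReal (Real.exp (-θ * (c (t-1) ω : ℝ))) ∂μ :=
                  lintegral_congr fun ω => by rw [hX, hAdef, expNeg_coe]
              _ = Mc := hMck (t-1)
  -- one-step recursion
  have hstep : ∀ s t : ℕ, s < t →
      Φ s t ≤ Mc * Φ s (t-1) + Ew * Φ s (max (t-d) s) := by
    intro s t hst
    have hpath : ∀ ω : Ω, expNeg θ (ncG d W (fun k => A k ω) s t) ≤
        expNeg θ (ncG d W (fun k => A k ω) s (t-1)) * expNeg θ (A (t-1) ω)
        + Ew * expNeg θ (ncG d W (fun k => A k ω) s (max (t-d) s)) := by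
      intro ω
      refine le_trans (expNeg_anti hθ.le (ncG_step hd hst)) ?_
      refine le_trans expNeg_min ?_
      refine add_le_add ?_ ?_
      · rw [expNeg_add, mul_comm]
      · rw [expNeg_add, hEwdef, expNeg_ofReal hw.le]
    have hm1 : Measurable fun ω => expNeg θ (ncG d W (fun k => A k ω) s (t-1)) *
        expNeg θ (A (t-1) ω) :=
      (hIntMeas s (t-1)).mul (measurable_expNeg.comp (hAmeas (t-1)))
    calc Φ s t ≤ ∫⁻ ω, (expNeg θ (ncG d W (fun k => A k ω) s (t-1)) * expNeg θ (A (t-1) ω)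
          + Ew * expNeg θ (ncG d W (fun k => A k ω) s (max (t-d) s))) ∂μ := by
          rw [hΦ]; exact lintegral_mono hpath
      _ = (∫⁻ ω, expNeg θ (ncG d W (fun k => A k ω) s (t-1)) * expNeg θ (A (t-1) ω) ∂μ)
          + ∫⁻ ω, Ew * expNeg θ (ncG d W (fun k => A k ω) s (max (t-d) s)) ∂μ :=
          lintegral_add_left hm1 _
      _ = Mc * Φ s (t-1) + Ew * Φ s (max (t-d) s) := by
          rw [hsplit1 s t hst, lintegral_const_mul Ew (hIntMeas s (max (t-d) s)), mul_comm (Φ s (t-1)), hΦ]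
  -- monotonicity in the right endpoint
  have hmono : ∀ s t t' : ℕ, s ≤ t' → t' ≤ t → Φ s t ≤ Φ s t' := by
    intro s t t' h1 h2
    rw [hΦ, hΦ]
    exact lintegral_mono fun ω => expNeg_anti hθ.le (ncG_end_mono h1 h2)
  -- Φ is bounded by the explicit super-solution
  have hmain : ∀ N s t : ℕ, s ≤ t → t - s ≤ N → Φ s t ≤ Dseq d Mc Ew (t-s) := by
    intro N
    induction N with
    | zero =>
      intro s t hst hN
      have : t = s := by omega
      subst this
      rw [Nat.sub_self, Dseq_zero]
      exact hΦ1 t t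
    | succ N ihN =>
      intro s t hst hN
      rcases eq_or_lt_of_le hst with rfl | hlt
      · rw [Nat.sub_self, Dseq_zero]
        exact hΦ1 s s
      have h1 : Φ s (t-1) ≤ Dseq d Mc Ew (t-1-s) := ihN s (t-1) (by omega) (by omega)
      have h2 : Φ s (max (t-d) s) ≤ Dseq d Mc Ew ((t-s)-d) := by
        have := ihN s (max (t-d) s) (le_max_right _ _) (by omega)
        rwa [show max (t-d) s - s = (t-s)-d by omega] at this
      calc Φ s t ≤ Mc * Φ s (t-1) + Ew * Φ s (max (t-d) s) := hstep s t hlt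
        _ ≤ Mc * Dseq d Mc Ew (t-1-s) + Ew * Dseq d Mc Ew ((t-s)-d) :=
            add_le_add (mul_le_mul_right h1 Mc) (mul_le_mul_right h2 Ew)
        _ = Mc * Dseq d Mc Ew ((t-s)-1) + Ew * Dseq d Mc Ew ((t-s)-d) := by
            rw [show t-1-s = (t-s)-1 by omega]
        _ ≤ Dseq d Mc Ew (t-s) := Dseq_step hd (by omega)
  -- conclusion
  intro s t hst
  have hgoal : (∫⁻ ω, expNeg θ
      (conv (subClosure (conv (conv (S ω) (deltaD d)) (deltaW W))) (S ω) s t) ∂μ) = Φ s t := by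
    rw [hΦ]
    refine lintegral_congr fun ω => ?_
    have hSa : S ω = ncS (fun k => A k ω) := by
      funext u v
      rw [hS ω u v]
      rfl
    rw [hSa]
    rfl
  rw [hgoal]
  rcases Nat.eq_zero_or_pos ((t - s) / d) with hm | hm
  · rw [hm, pow_zero]
    exact hΦ1 s t
  · have hmd : ((t-s)/d) * d ≤ t - s := Nat.div_mul_le_self _ _
    calc Φ s t ≤ Φ s (s + ((t-s)/d) * d) := hmono s t _ (by omega) (by omega)
      _ ≤ Dseq d Mc Ew ((s + ((t-s)/d) * d) - s) := hmain _ s _ (by omega) le_rfl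
      _ = Dseq d Mc Ew (((t-s)/d) * d) := by rw [Nat.add_sub_cancel_left]
      _ ≤ K ^ ((t-s)/d) := Dseq_le hd hMc1 hm
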